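/- arXiv:2503.17466 — 3 statements merged into one kernel-verified Lean document; each statement's English description precedes it below -/
import Mathlib

section
/- Let n ≥ 1, m ∈ ℝ, r ≥ 0, and let p : ℤⁿ → ℂ be a symbol of order m. Then p(D) is GH-r if and only if the set {ξ ∈ ℤⁿ : p(ξ) = 0} is finite and there exists a constant K > 0 such that |p(ξ)| ≥ K·|ξ|^(m−r) for every ξ ∈ ℤⁿ \ {0} with p(ξ) ≠ 0. -/
open scoped BigOperators

/-- `|ξ| = Σⱼ |ξⱼ|`. -/
noncomputable def l1norm {n : ℕ} (ξ : Fin n → ℤ) : ℝ := ∑ j, |(ξ j : ℝ)|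

/-- `‖ξ‖² = Σⱼ ξⱼ²`. -/
noncomputable def l2normSq {n : ℕ} (ξ : Fin n → ℤ) : ℝ := ∑ j, ((ξ j : ℝ)) ^ 2

/-- `u ∈ H^k(𝕋ⁿ)` in terms of its Fourier coefficients. -/
def InSobolev {n : ℕ} (k : ℝ) (u : (Fin n → ℤ) → ℂ) : Prop :=
  Summable fun ξ : Fin n → ℤ => (1 + l2normSq ξ) ^ k * ‖u ξ‖ ^ 2

/-- Polynomial growth of Fourier coefficients (a distribution on `𝕋ⁿ`). -/
def PolyGrowth {n : ℕ} (u : (Fin n → ℤ) → ℂ) : Prop :=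
  ∃ C N : ℝ, 0 < C ∧ 0 < N ∧
    ∀ ξ, ‖u ξ‖ ≤ C * (1 + Real.sqrt (l2normSq ξ)) ^ N

/-- Rapidly decreasing Fourier coefficients (a smooth function on `𝕋ⁿ`). -/
def RapidDecay {n : ℕ} (v : (Fin n → ℤ) → ℂ) : Prop :=
  ∀ N : ℝ, 0 < N → ∃ C : ℝ, 0 < C ∧
    ∀ ξ, ‖v ξ‖ ≤ C * (1 + Real.sqrt (l2normSq ξ)) ^ (-N)

/-- `p` is a symbol of order `m`. -/
def SymbolOrder {n : ℕ} (m : ℝ) (p : (Fin n → ℤ) → ℂ) : Prop :=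
  ∃ C : ℝ, 0 < C ∧ ∀ ξ, ‖p ξ‖ ≤ C * (1 + l2normSq ξ) ^ (m / 2)

/-- `p(D)` is globally hypoelliptic with loss of `r` derivatives (GH-`r`). -/
def GHr {n : ℕ} (m r : ℝ) (p : (Fin n → ℤ) → ℂ) : Prop :=
  ∀ (k : ℝ) (u : (Fin n → ℤ) → ℂ), PolyGrowth u →
    InSobolev k (fun ξ => p ξ * u ξ) → InSobolev (k + m - r) u

/-- `p(D)` is globally solvable with loss of `r` derivatives (GS-`r`). -/
def GSr {n : ℕ} (m r : ℝ) (p : (Fin n → ℤ) → ℂ) : Prop :=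
  ∀ (k : ℝ) (f : (Fin n → ℤ) → ℂ), InSobolev k f → (∀ ξ, p ξ = 0 → f ξ = 0) →
    ∃ u : (Fin n → ℤ) → ℂ, InSobolev (k + m - r) u ∧ ∀ ξ, p ξ * u ξ = f ξ

/-- `p(D)` is globally hypoelliptic (GH). -/
def GloballyHypoelliptic {n : ℕ} (p : (Fin n → ℤ) → ℂ) : Prop :=
  ∀ u : (Fin n → ℤ) → ℂ, PolyGrowth u →
    RapidDecay (fun ξ => p ξ * u ξ) → RapidDecay u

section Aux
variable {n : ℕ}

lemma l1_nonneg (ξ : Fin n → ℤ) : 0 ≤ l1norm ξ :=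
  Finset.sum_nonneg fun _ _ => abs_nonneg _

lemma l2_nonneg (ξ : Fin n → ℤ) : 0 ≤ l2normSq ξ :=
  Finset.sum_nonneg fun _ _ => sq_nonneg _

lemma one_add_l2_pos (ξ : Fin n → ℤ) : 0 < 1 + l2normSq ξ := by
  have := l2_nonneg ξ; linarith

lemma l2_le_l1_sq (ξ : Fin n → ℤ) : l2normSq ξ ≤ l1norm ξ ^ 2 := by
  have h : ∀ j : Fin n, (ξ j : ℝ) ^ 2 = |(ξ j : ℝ)| ^ 2 := fun j => (sq_abs _).symm
  calc l2normSq ξ = ∑ j, |(ξ j : ℝ)| ^ 2 := Finset.sum_congr rfl fun j _ => h j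
    _ ≤ (∑ j, |(ξ j : ℝ)|) ^ 2 :=
        Finset.sum_sq_le_sq_sum_of_nonneg fun j _ => abs_nonneg _
    _ = l1norm ξ ^ 2 := rfl

lemma l1_sq_le (ξ : Fin n → ℤ) : l1norm ξ ^ 2 ≤ n * l2normSq ξ := by
  have := sq_sum_le_card_mul_sum_sq (s := (Finset.univ : Finset (Fin n)))
    (f := fun j => |(ξ j : ℝ)|)
  simp only [Finset.card_univ, Fintype.card_fin] at this
  calc l1norm ξ ^ 2 ≤ (n : ℝ) * ∑ j, |(ξ j : ℝ)| ^ 2 := this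
    _ = n * l2normSq ξ := by
        congr 1; exact Finset.sum_congr rfl fun j _ => sq_abs _

lemma one_le_l2 {ξ : Fin n → ℤ} (hξ : ξ ≠ 0) : 1 ≤ l2normSq ξ := by
  obtain ⟨j, hj⟩ : ∃ j, ξ j ≠ 0 := by
    by_contra h; push_neg at h; exact hξ (funext h)
  have h1 : (1 : ℝ) ≤ (ξ j : ℝ) ^ 2 := by
    have h2 : (1 : ℤ) ≤ (ξ j) ^ 2 := by
      have := Int.one_le_abs hj
      nlinarith [sq_abs (ξ j)]
    exact_mod_cast h2
  calc (1:ℝ) ≤ (ξ j : ℝ)^2 := h1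
    _ ≤ l2normSq ξ := Finset.single_le_sum (fun i _ => sq_nonneg ((ξ i : ℝ))) (Finset.mem_univ j)

lemma one_le_l1 {ξ : Fin n → ℤ} (hξ : ξ ≠ 0) : 1 ≤ l1norm ξ := by
  obtain ⟨j, hj⟩ : ∃ j, ξ j ≠ 0 := by
    by_contra h; push_neg at h; exact hξ (funext h)
  have h1 : (1 : ℝ) ≤ |(ξ j : ℝ)| := by
    have : (1 : ℤ) ≤ |ξ j| := Int.one_le_abs hj
    calc (1:ℝ) = ((1:ℤ):ℝ) := by norm_num
      _ ≤ ((|ξ j| : ℤ) : ℝ) := by exact_mod_cast this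
      _ = |(ξ j : ℝ)| := by push_cast; ring
  calc (1:ℝ) ≤ |(ξ j : ℝ)| := h1
    _ ≤ l1norm ξ := Finset.single_le_sum (fun i _ => abs_nonneg ((ξ i : ℝ))) (Finset.mem_univ j)

lemma l1_pos {ξ : Fin n → ℤ} (hξ : ξ ≠ 0) : 0 < l1norm ξ :=
  lt_of_lt_of_le one_pos (one_le_l1 hξ)

lemma comp_le (hn : 1 ≤ n) (s : ℝ) {ξ : Fin n → ℤ} (hξ : ξ ≠ 0) :
    (l1norm ξ ^ s) ^ 2 ≤ ((n : ℝ) ^ s + (2:ℝ) ^ (-s)) * (1 + l2normSq ξ) ^ s := by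
  have hl1 : 0 < l1norm ξ := l1_pos hξ
  have hl2 : 1 ≤ l2normSq ξ := one_le_l2 hξ
  have hpos : 0 < 1 + l2normSq ξ := one_add_l2_pos ξ
  have hnpos : (0:ℝ) < n := by
    have : 0 < n := hn
    exact_mod_cast this
  have hsq : (l1norm ξ ^ s) ^ 2 = (l1norm ξ ^ 2) ^ s := by
    rw [← Real.rpow_natCast (l1norm ξ ^ s) 2, ← Real.rpow_natCast (l1norm ξ) 2,
      ← Real.rpow_mul hl1.le, ← Real.rpow_mul hl1.le, mul_comm]
  rw [hsq]
  have hc2 : (0:ℝ) ≤ (2:ℝ) ^ (-s) := (Real.rpow_pos_of_pos two_pos _).le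
  have hcn : (0:ℝ) ≤ (n:ℝ) ^ s := (Real.rpow_pos_of_pos hnpos _).le
  rcases le_or_gt 0 s with hs | hs
  · have h1 : l1norm ξ ^ 2 ≤ (n : ℝ) * (1 + l2normSq ξ) := by
      have := l1_sq_le ξ
      nlinarith [l2_nonneg ξ]
    calc (l1norm ξ ^ 2) ^ s ≤ ((n:ℝ) * (1 + l2normSq ξ)) ^ s :=
          Real.rpow_le_rpow (sq_nonneg _) h1 hs
      _ = (n:ℝ) ^ s * (1 + l2normSq ξ) ^ s := Real.mul_rpow hnpos.le hpos.le
      _ ≤ ((n:ℝ) ^ s + (2:ℝ) ^ (-s)) * (1 + l2normSq ξ) ^ s := by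
          apply mul_le_mul_of_nonneg_right _ (Real.rpow_nonneg hpos.le _)
          linarith
  · have h1 : (1 + l2normSq ξ) / 2 ≤ l1norm ξ ^ 2 := by
      have := l2_le_l1_sq ξ
      nlinarith
    have h2 : (0:ℝ) < (1 + l2normSq ξ) / 2 := by linarith
    calc (l1norm ξ ^ 2) ^ s ≤ ((1 + l2normSq ξ) / 2) ^ s :=
          Real.rpow_le_rpow_of_nonpos h2 h1 hs.le
      _ = (2:ℝ) ^ (-s) * (1 + l2normSq ξ) ^ s := by
          rw [Real.div_rpow hpos.le (by norm_num), Real.rpow_neg (by norm_num)]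
          ring
      _ ≤ ((n:ℝ) ^ s + (2:ℝ) ^ (-s)) * (1 + l2normSq ξ) ^ s := by
          apply mul_le_mul_of_nonneg_right _ (Real.rpow_nonneg hpos.le _)
          linarith

lemma comp_ge (hn : 1 ≤ n) (s : ℝ) {ξ : Fin n → ℤ} (hξ : ξ ≠ 0) :
    (1 + l2normSq ξ) ^ s ≤ ((n : ℝ) ^ (-s) + (2:ℝ) ^ s) * (l1norm ξ ^ s) ^ 2 := by
  have h := comp_le hn (-s) hξ
  rw [neg_neg] at h
  have hl1 : 0 < l1norm ξ := l1_pos hξ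
  have hpos : 0 < 1 + l2normSq ξ := one_add_l2_pos ξ
  set c := (n : ℝ) ^ (-s) + (2:ℝ) ^ s with hc
  have hA : (0:ℝ) < (l1norm ξ ^ s) ^ 2 := by positivity
  have hB : (0:ℝ) < (1 + l2normSq ξ) ^ s := Real.rpow_pos_of_pos hpos _
  have hinv1 : (l1norm ξ ^ (-s)) ^ 2 = ((l1norm ξ ^ s) ^ 2)⁻¹ := by
    rw [Real.rpow_neg hl1.le]; rw [inv_pow]
  have hinv2 : (1 + l2normSq ξ) ^ (-s) = ((1 + l2normSq ξ) ^ s)⁻¹ :=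
    Real.rpow_neg hpos.le _
  rw [hinv1, hinv2] at h
  rw [inv_le_iff_one_le_mul₀ hA] at h
  calc (1 + l2normSq ξ) ^ s = (1 + l2normSq ξ) ^ s * 1 := (mul_one _).symm
    _ ≤ (1 + l2normSq ξ) ^ s * (c * ((1 + l2normSq ξ) ^ s)⁻¹ * (l1norm ξ ^ s) ^ 2) :=
        mul_le_mul_of_nonneg_left h hB.le
    _ = c * (l1norm ξ ^ s) ^ 2 := by field_simp

end Aux

section Main
variable {n : ℕ}

open Filter in
lemma finite_of_summable_indicator {S : Set (Fin n → ℤ)}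
    (h : Summable fun ξ : Fin n → ℤ =>
      (1 + l2normSq ξ) ^ (0:ℝ) * ‖(S.indicator fun _ => (1:ℂ)) ξ‖ ^ 2) :
    S.Finite := by
  have ht := h.tendsto_cofinite_zero
  have hev : ∀ᶠ ξ in Filter.cofinite,
      (1 + l2normSq ξ) ^ (0:ℝ) * ‖(S.indicator fun _ => (1:ℂ)) ξ‖ ^ 2 < 1 :=
    ht.eventually (Filter.Tendsto.eventually_lt_const one_pos tendsto_id) |>.mono (fun _ h => h)
  rw [Filter.eventually_cofinite] at hev
  refine hev.subset fun ξ hξ => ?_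
  simp only [Set.mem_setOf_eq, not_lt]
  rw [Set.indicator_of_mem hξ, Real.rpow_zero, norm_one, one_pow, mul_one]

lemma polyGrowth_indicator (S : Set (Fin n → ℤ)) :
    PolyGrowth (S.indicator fun _ => (1:ℂ)) := by
  refine ⟨1, 1, one_pos, one_pos, fun ξ => ?_⟩
  have h1 : (1:ℝ) ≤ 1 + Real.sqrt (l2normSq ξ) := by
    have := Real.sqrt_nonneg (l2normSq ξ); linarith
  have h2 : (1:ℝ) ≤ (1 + Real.sqrt (l2normSq ξ)) ^ (1:ℝ) := by
    rw [Real.rpow_one]; exact h1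
  by_cases hξ : ξ ∈ S
  · rw [Set.indicator_of_mem hξ, norm_one, one_mul]; exact h2
  · rw [Set.indicator_of_notMem hξ, norm_zero, one_mul]; exact le_trans zero_le_one h2

lemma l1_ball_finite (M : ℝ) : {ξ : Fin n → ℤ | l1norm ξ ≤ M}.Finite := by
  have : {ξ : Fin n → ℤ | l1norm ξ ≤ M} ⊆
      Set.pi Set.univ (fun _ : Fin n => Set.Icc (-⌈M⌉) ⌈M⌉) := by
    intro ξ hξ j _
    have h1 : |(ξ j : ℝ)| ≤ l1norm ξ :=
      Finset.single_le_sum (fun i _ => abs_nonneg ((ξ i : ℝ))) (Finset.mem_univ j)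
    have h2 : |(ξ j : ℝ)| ≤ (⌈M⌉ : ℝ) := h1.trans (hξ.trans (Int.le_ceil M))
    have h3 : |ξ j| ≤ ⌈M⌉ := by exact_mod_cast (by push_cast; exact h2 : ((|ξ j| : ℤ) : ℝ) ≤ (⌈M⌉ : ℝ))
    exact Set.mem_Icc.mpr (abs_le.mp h3)
  exact (Set.Finite.pi fun _ => Set.finite_Icc _ _).subset this

lemma key_step {p : (Fin n → ℤ) → ℂ} {s : ℝ}
    (h : ∀ K : ℝ, 0 < K → ∃ ξ : Fin n → ℤ, ξ ≠ 0 ∧ p ξ ≠ 0 ∧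
      ‖p ξ‖ < K * l1norm ξ ^ s) :
    ∀ M : ℝ, ∀ ε : ℝ, 0 < ε → ∃ ξ : Fin n → ℤ, M < l1norm ξ ∧ p ξ ≠ 0 ∧
      ‖p ξ‖ < ε * l1norm ξ ^ s := by
  intro M ε hε
  classical
  have hBfin : {ξ : Fin n → ℤ | l1norm ξ ≤ M ∧ ξ ≠ 0 ∧ p ξ ≠ 0}.Finite :=
    (l1_ball_finite M).subset fun ξ hξ => hξ.1
  set q : (Fin n → ℤ) → ℝ := fun ξ => ‖p ξ‖ / l1norm ξ ^ s with hq
  set T : Finset ℝ := insert ε (hBfin.toFinset.image q) with hT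
  have hTne : T.Nonempty := ⟨ε, Finset.mem_insert_self _ _⟩
  set δ := T.min' hTne with hδ
  have hδpos : 0 < δ := by
    rw [hδ, Finset.lt_min'_iff]
    intro b hb
    rcases Finset.mem_insert.mp hb with h1 | h1
    · rw [h1]; exact hε
    · obtain ⟨ξ, hξ, hqξ⟩ := Finset.mem_image.mp h1
      rw [Set.Finite.mem_toFinset] at hξ
      have hl1 : 0 < l1norm ξ ^ s := Real.rpow_pos_of_pos (l1_pos hξ.2.1) s
      rw [← hqξ]
      exact div_pos (norm_pos_iff.mpr hξ.2.2) hl1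
  have hδε : δ ≤ ε := Finset.min'_le T ε (Finset.mem_insert_self _ _)
  obtain ⟨ξ0, hξ0ne, hp0, hlt⟩ := h δ hδpos
  have hl1pos : 0 < l1norm ξ0 ^ s := Real.rpow_pos_of_pos (l1_pos hξ0ne) s
  refine ⟨ξ0, ?_, hp0, hlt.trans_le (mul_le_mul_of_nonneg_right hδε hl1pos.le)⟩
  by_contra hM
  push_neg at hM
  have hmem : ξ0 ∈ {ξ : Fin n → ℤ | l1norm ξ ≤ M ∧ ξ ≠ 0 ∧ p ξ ≠ 0} := ⟨hM, hξ0ne, hp0⟩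
  have hqm : q ξ0 ∈ T := Finset.mem_insert_of_mem
    (Finset.mem_image_of_mem q (Set.Finite.mem_toFinset hBfin |>.mpr hmem))
  have hδq : δ ≤ q ξ0 := Finset.min'_le T _ hqm
  have : δ * l1norm ξ0 ^ s ≤ ‖p ξ0‖ := by
    calc δ * l1norm ξ0 ^ s ≤ q ξ0 * l1norm ξ0 ^ s :=
          mul_le_mul_of_nonneg_right hδq hl1pos.le
      _ = ‖p ξ0‖ := div_mul_cancel₀ _ hl1pos.ne'
  exact absurd hlt (not_lt.mpr this)

lemma not_GHr_of_no_bound (hn : 1 ≤ n) (m r : ℝ) {p : (Fin n → ℤ) → ℂ}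
    (h : ∀ K : ℝ, 0 < K → ∃ ξ : Fin n → ℤ, ξ ≠ 0 ∧ p ξ ≠ 0 ∧
      ‖p ξ‖ < K * l1norm ξ ^ (m - r)) :
    ¬ GHr m r p := by
  intro hGH
  classical
  have key := key_step h
  choose! F hF1 hF2 hF3 using key
  set σ : ℕ → (Fin n → ℤ) := fun j =>
    Nat.rec (F 0 ((1/2 : ℝ) ^ 0)) (fun i prev => F (l1norm prev) ((1/2 : ℝ) ^ (i+1))) j with hσ
  have hεpos : ∀ j : ℕ, (0:ℝ) < (1/2 : ℝ) ^ j := fun j => by positivity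
  have hstep : ∀ j : ℕ, σ (j+1) = F (l1norm (σ j)) ((1/2 : ℝ) ^ (j+1)) := fun j => rfl
  have h0 : σ 0 = F 0 ((1/2 : ℝ) ^ 0) := rfl
  have hmono : StrictMono fun j => l1norm (σ j) := by
    apply strictMono_nat_of_lt_succ
    intro j
    rw [hstep j]
    exact hF1 _ _ (hεpos (j+1))
  have hinj : Function.Injective σ := fun a b hab => hmono.injective (congrArg l1norm hab)
  have hppos : ∀ j, p (σ j) ≠ 0 := by
    intro j; cases j with
    | zero => rw [h0]; exact hF2 _ _ (hεpos 0)
    | succ i => rw [hstep i]; exact hF2 _ _ (hεpos (i+1))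
  have hsmall : ∀ j : ℕ, ‖p (σ j)‖ < (1/2:ℝ)^j * l1norm (σ j) ^ (m - r) := by
    intro j; cases j with
    | zero => rw [h0]; exact hF3 _ _ (hεpos 0)
    | succ i => rw [hstep i]; exact hF3 _ _ (hεpos (i+1))
  have hl1pos : ∀ j, 0 < l1norm (σ j) := by
    intro j
    have h00 : 0 < l1norm (σ 0) := by rw [h0]; exact hF1 0 _ (hεpos 0)
    exact lt_of_lt_of_le h00 (hmono.monotone (Nat.zero_le j))
  have hne0 : ∀ j, σ j ≠ 0 := by
    intro j hj
    have h1 := hl1pos j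
    rw [hj] at h1
    simp [l1norm] at h1
  set S := Set.range σ with hS
  set u := S.indicator (fun _ => (1:ℂ)) with hu
  have huσ : ∀ j, u (σ j) = 1 := fun j => Set.indicator_of_mem (Set.mem_range_self j) _
  have huout : ∀ ξ ∉ S, u ξ = 0 := fun ξ hξ => Set.indicator_of_notMem hξ _
  have hn' : (0:ℝ) < n := by
    have : 0 < n := hn
    exact_mod_cast this
  have hPU : InSobolev (r - m) (fun ξ => p ξ * u ξ) := by
    show Summable fun ξ : Fin n → ℤ =>
      (1 + l2normSq ξ) ^ (r - m) * ‖p ξ * u ξ‖ ^ 2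
    set f : (Fin n → ℤ) → ℝ :=
      fun ξ => (1 + l2normSq ξ) ^ (r - m) * ‖p ξ * u ξ‖ ^ 2 with hf
    have hzero : ∀ ξ ∉ S, f ξ = 0 := by
      intro ξ hξ; rw [hf]; simp [huout ξ hξ]
    rw [← hinj.summable_iff hzero]
    set c0 := ((n:ℝ) ^ (m - r) + (2:ℝ) ^ (-(m - r))) with hc0
    have hc0pos : 0 < c0 :=
      add_pos (Real.rpow_pos_of_pos hn' _) (Real.rpow_pos_of_pos two_pos _)
    apply Summable.of_nonneg_of_le (f := fun j : ℕ => c0 * (1/4 : ℝ)^j)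
      (g := f ∘ σ)
    · intro j
      exact mul_nonneg (Real.rpow_nonneg (one_add_l2_pos _).le _) (sq_nonneg _)
    · intro j
      show f (σ j) ≤ c0 * (1/4:ℝ)^j
      have e1 : ‖p (σ j) * u (σ j)‖ = ‖p (σ j)‖ := by
        rw [norm_mul, huσ j, norm_one, mul_one]
      have e2 : ‖p (σ j)‖ ^ 2 ≤ ((1/2:ℝ)^j * l1norm (σ j) ^ (m-r))^2 :=
        pow_le_pow_left₀ (norm_nonneg _) (hsmall j).le 2
      have e3 : (((1/2:ℝ))^j)^2 = (1/4:ℝ)^j := by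
        rw [← pow_mul, mul_comm j 2, pow_mul]; norm_num
      have e5 : (1 + l2normSq (σ j)) ^ (r-m) * (1 + l2normSq (σ j)) ^ (m-r) = 1 := by
        rw [← Real.rpow_add (one_add_l2_pos (σ j)), show r - m + (m - r) = 0 by ring,
          Real.rpow_zero]
      have hcomp := comp_le hn (m - r) (hne0 j)
      calc f (σ j)
          = (1 + l2normSq (σ j)) ^ (r-m) * ‖p (σ j)‖ ^ 2 := by
            simp only [hf]; rw [e1]
        _ ≤ (1 + l2normSq (σ j)) ^ (r-m) * ((1/2:ℝ)^j * l1norm (σ j) ^ (m-r))^2 :=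
            mul_le_mul_of_nonneg_left e2 (Real.rpow_nonneg (one_add_l2_pos _).le _)
        _ = (1/4:ℝ)^j * ((1 + l2normSq (σ j)) ^ (r-m) * (l1norm (σ j) ^ (m-r))^2) := by
            rw [mul_pow, e3]; ring
        _ ≤ (1/4:ℝ)^j * ((1 + l2normSq (σ j)) ^ (r-m) * (c0 * (1 + l2normSq (σ j)) ^ (m-r))) := by
            apply mul_le_mul_of_nonneg_left _ (by positivity : (0:ℝ) ≤ (1/4:ℝ)^j)
            exact mul_le_mul_of_nonneg_left hcomp (Real.rpow_nonneg (one_add_l2_pos _).le _)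
        _ = c0 * (1/4:ℝ)^j := by
            rw [show (1 + l2normSq (σ j)) ^ (r-m) * (c0 * (1 + l2normSq (σ j)) ^ (m-r))
              = c0 * ((1 + l2normSq (σ j)) ^ (r-m) * (1 + l2normSq (σ j)) ^ (m-r)) by ring,
              e5, mul_one]; ring
    · exact (summable_geometric_of_lt_one (by norm_num) (by norm_num)).mul_left c0
  have hfin := hGH (r - m) u (polyGrowth_indicator S) hPU
  rw [show r - m + m - r = 0 by ring] at hfin
  have hSfin : S.Finite := finite_of_summable_indicator hfin
  exact (Set.infinite_range_of_injective hinj) hSfin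

end Main

theorem stmt_0 {n : ℕ} (hn : 1 ≤ n) (m r : ℝ) (hr : 0 ≤ r)
    (p : (Fin n → ℤ) → ℂ) (hp : SymbolOrder m p) :
    GHr m r p ↔
      ({ξ : Fin n → ℤ | p ξ = 0}.Finite ∧
        ∃ K : ℝ, 0 < K ∧ ∀ ξ : Fin n → ℤ, ξ ≠ 0 → p ξ ≠ 0 →
          K * l1norm ξ ^ (m - r) ≤ ‖p ξ‖) := by
  constructor
  · intro hGH
    constructor
    · set Z := {ξ : Fin n → ℤ | p ξ = 0} with hZ
      set u := Z.indicator (fun _ => (1:ℂ)) with hu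
      have hpu : ∀ ξ, p ξ * u ξ = 0 := by
        intro ξ
        by_cases hξ : ξ ∈ Z
        · rw [Set.mem_setOf_eq] at hξ
          rw [hξ, zero_mul]
        · rw [hu, Set.indicator_of_notMem hξ, mul_zero]
      have hsum0 : InSobolev (r - m) (fun ξ => p ξ * u ξ) := by
        show Summable fun ξ : Fin n → ℤ =>
          (1 + l2normSq ξ) ^ (r - m) * ‖p ξ * u ξ‖ ^ 2
        have he : (fun ξ : Fin n → ℤ =>
            (1 + l2normSq ξ) ^ (r - m) * ‖p ξ * u ξ‖ ^ 2) = fun _ => 0 := by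
          funext ξ; rw [hpu ξ, norm_zero]; ring
        rw [he]; exact summable_zero
      have hfin := hGH (r - m) u (polyGrowth_indicator Z) hsum0
      rw [show r - m + m - r = 0 by ring] at hfin
      exact finite_of_summable_indicator hfin
    · by_contra hK
      push_neg at hK
      exact not_GHr_of_no_bound hn m r hK hGH
  · rintro ⟨hZ, K, hK, hbd⟩
    intro k u _ hsum
    have hFfin : ({ξ : Fin n → ℤ | p ξ = 0} ∪ {0}).Finite :=
      hZ.union (Set.finite_singleton 0)
    have hn' : (0:ℝ) < n := by
      have : 0 < n := hn
      exact_mod_cast this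
    set c := (n:ℝ) ^ (-(m - r)) + (2:ℝ) ^ (m - r) with hc
    have hcpos : 0 < c :=
      add_pos (Real.rpow_pos_of_pos hn' _) (Real.rpow_pos_of_pos two_pos _)
    show Summable fun ξ : Fin n → ℤ =>
      (1 + l2normSq ξ) ^ (k + m - r) * ‖u ξ‖ ^ 2
    rw [← hFfin.summable_compl_iff]
    have hsub : Summable ((fun ξ : Fin n → ℤ =>
        (1 + l2normSq ξ) ^ k * ‖p ξ * u ξ‖ ^ 2) ∘
        (Subtype.val : ↥({ξ : Fin n → ℤ | p ξ = 0} ∪ {0})ᶜ → (Fin n → ℤ))) :=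
      hsum.subtype _
    apply Summable.of_nonneg_of_le
      (f := fun ξ : ↥({ξ : Fin n → ℤ | p ξ = 0} ∪ {0})ᶜ =>
        (c / K^2) * ((1 + l2normSq ξ.val) ^ k * ‖p ξ.val * u ξ.val‖ ^ 2))
      (g := _)
    · intro ξ
      exact mul_nonneg (Real.rpow_nonneg (one_add_l2_pos _).le _) (sq_nonneg _)
    · rintro ⟨ξ, hξ⟩
      have hξ' := hξ
      rw [Set.mem_compl_iff, Set.mem_union, Set.mem_setOf_eq, Set.mem_singleton_iff] at hξ'
      push_neg at hξ'
      obtain ⟨hp0, hξ0⟩ := hξ'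
      have hb := hbd ξ hξ0 hp0
      have hl1p : 0 < l1norm ξ ^ (m - r) := Real.rpow_pos_of_pos (l1_pos hξ0) _
      have h2 : K^2 * (l1norm ξ ^ (m - r))^2 ≤ ‖p ξ‖ ^ 2 := by
        have h2' := pow_le_pow_left₀ (by positivity : (0:ℝ) ≤ K * l1norm ξ ^ (m - r)) hb 2
        rwa [mul_pow] at h2'
      have h3 := comp_ge hn (m - r) hξ0
      have h5 : (1 + l2normSq ξ) ^ (m - r) * K^2 ≤ c * ‖p ξ‖ ^ 2 := by
        calc (1 + l2normSq ξ) ^ (m - r) * K^2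
            ≤ (c * (l1norm ξ ^ (m - r))^2) * K^2 :=
              mul_le_mul_of_nonneg_right h3 (sq_nonneg K)
          _ = c * (K^2 * (l1norm ξ ^ (m - r))^2) := by ring
          _ ≤ c * ‖p ξ‖ ^ 2 := mul_le_mul_of_nonneg_left h2 hcpos.le
      show (1 + l2normSq ξ) ^ (k + m - r) * ‖u ξ‖ ^ 2
          ≤ (c / K^2) * ((1 + l2normSq ξ) ^ k * ‖p ξ * u ξ‖ ^ 2)
      have e4 : (1 + l2normSq ξ) ^ (k + m - r)
          = (1 + l2normSq ξ) ^ k * (1 + l2normSq ξ) ^ (m - r) := by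
        rw [show k + m - r = k + (m - r) by ring, Real.rpow_add (one_add_l2_pos ξ)]
      rw [e4, norm_mul, mul_pow, div_mul_eq_mul_div, le_div_iff₀ (by positivity : (0:ℝ) < K^2)]
      have h6 := mul_le_mul_of_nonneg_left h5
        (mul_nonneg (Real.rpow_nonneg (one_add_l2_pos ξ).le k) (sq_nonneg (‖u ξ‖)))
      nlinarith [h6]
    · exact hsub.mul_left _
end

section
/- Let n ≥ 1, m ∈ ℝ, r' > 0, and let p : ℤⁿ → ℂ be a symbol of order m. If there exists a constant K' > 0 such that |p(ξ)| ≤ K'·|ξ|^(m−r') for infinitely many ξ ∈ ℤⁿ \ {0}, then p(D) is not GH-r for any r with 0 ≤ r < r'. -/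
open scoped BigOperators

lemma helper_l2_nonneg {n : ℕ} (ξ : Fin n → ℤ) : 0 ≤ l2normSq ξ :=
  Finset.sum_nonneg fun _ _ => sq_nonneg _

lemma helper_l1_nonneg {n : ℕ} (ξ : Fin n → ℤ) : 0 ≤ l1norm ξ :=
  Finset.sum_nonneg fun _ _ => abs_nonneg _

lemma helper_one_le_l2 {n : ℕ} {ξ : Fin n → ℤ} (h : ξ ≠ 0) : 1 ≤ l2normSq ξ := by
  obtain ⟨j, hj⟩ := Function.ne_iff.mp h
  have hj' : ξ j ≠ 0 := by simpa using hj
  have h1 : (1:ℤ) ≤ |ξ j| := Int.one_le_abs hj'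
  have h2 : (1:ℝ) ≤ ((ξ j : ℝ)) ^ 2 := by
    have : (1:ℤ) ≤ (ξ j)^2 := by nlinarith [sq_abs (ξ j)]
    exact_mod_cast this
  exact le_trans h2 (Finset.single_le_sum (fun i _ => sq_nonneg ((ξ i : ℝ))) (Finset.mem_univ j))

lemma helper_l2_le_l1sq {n : ℕ} (ξ : Fin n → ℤ) : l2normSq ξ ≤ l1norm ξ ^ 2 := by
  have := Finset.sum_sq_le_sq_sum_of_nonneg
    (f := fun j : Fin n => |(ξ j : ℝ)|) (s := Finset.univ) (fun i _ => abs_nonneg _)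
  simpa [l1norm, l2normSq, sq_abs] using this

lemma helper_l1sq_le {n : ℕ} (ξ : Fin n → ℤ) : l1norm ξ ^ 2 ≤ (n : ℝ) * l2normSq ξ := by
  have := sq_sum_le_card_mul_sum_sq (s := (Finset.univ : Finset (Fin n)))
    (f := fun j => |(ξ j : ℝ)|)
  simpa [l1norm, l2normSq, sq_abs, Finset.card_univ] using this

lemma helper_int_abs_le_sq (a : ℤ) : |a| ≤ a ^ 2 := by
  rcases eq_or_ne a 0 with h | h
  · simp [h]
  · have h1 : 1 ≤ |a| := Int.one_le_abs h
    calc |a| = 1 * |a| := (one_mul _).symm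
      _ ≤ |a| * |a| := mul_le_mul_of_nonneg_right h1 (abs_nonneg a)
      _ = a ^ 2 := by rw [abs_mul_abs_self]; ring

lemma helper_finite_ball {n : ℕ} (R : ℝ) : {ξ : Fin n → ℤ | l2normSq ξ ≤ R}.Finite := by
  apply Set.Finite.subset (Finset.Icc (fun _ : Fin n => -⌈R⌉) (fun _ => ⌈R⌉)).finite_toSet
  intro ξ hξ
  have key : ∀ j, |ξ j| ≤ ⌈R⌉ := by
    intro j
    have h2 : ((ξ j : ℝ)) ^ 2 ≤ R :=
      le_trans (Finset.single_le_sum (fun i _ => sq_nonneg ((ξ i : ℝ))) (Finset.mem_univ j)) hξ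
    have habs : ((|ξ j| : ℤ) : ℝ) ≤ R := by
      have := helper_int_abs_le_sq (ξ j)
      have h3 : ((|ξ j| : ℤ) : ℝ) ≤ ((ξ j : ℝ)) ^ 2 := by exact_mod_cast this
      linarith
    exact_mod_cast le_trans habs (Int.le_ceil R)
  simp only [Finset.coe_Icc, Set.mem_Icc, Pi.le_def]
  exact ⟨fun j => neg_le_of_abs_le (key j), fun j => le_of_abs_le (key j)⟩

lemma helper_rpow_base_bound {x y c e : ℝ} (hx : 1 ≤ x) (hxy : x ≤ y) (hyc : y ≤ c * x)
    (hc : 1 ≤ c) : y ^ e ≤ c ^ |e| * x ^ e := by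
  have hx0 : (0:ℝ) < x := lt_of_lt_of_le one_pos hx
  have hc0 : (0:ℝ) ≤ c := le_trans zero_le_one hc
  rcases le_or_gt 0 e with he | he
  · rw [abs_of_nonneg he]
    calc y ^ e ≤ (c * x) ^ e := Real.rpow_le_rpow (le_trans hx0.le hxy) hyc he
      _ = c ^ e * x ^ e := Real.mul_rpow hc0 hx0.le
  · rw [abs_of_neg he]
    have h1 : y ^ e ≤ x ^ e := Real.rpow_le_rpow_of_nonpos hx0 hxy he.le
    have h2 : (1:ℝ) ≤ c ^ (-e) := Real.one_le_rpow hc (by linarith)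
    calc y ^ e ≤ x ^ e := h1
      _ = 1 * x ^ e := (one_mul _).symm
      _ ≤ c ^ (-e) * x ^ e :=
          mul_le_mul_of_nonneg_right h2 (Real.rpow_nonneg hx0.le _)

lemma helper_rpow_growth {b x s t : ℝ} (hb : 1 ≤ b) (hx : 1 ≤ x) (hxb : x ≤ b ^ 2)
    (hts : 2 * |s| ≤ t) : x ^ s ≤ b ^ t := by
  have hb0 : (0:ℝ) ≤ b := le_trans zero_le_one hb
  have ht0 : 0 ≤ t := le_trans (by positivity) hts
  rcases le_or_gt 0 s with hs | hs
  · calc x ^ s ≤ (b ^ 2) ^ s := Real.rpow_le_rpow (by linarith) hxb hs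
      _ = b ^ (2 * s) := by
          rw [← Real.rpow_natCast b 2, ← Real.rpow_mul hb0]; norm_num [mul_comm]
      _ ≤ b ^ t := Real.rpow_le_rpow_of_exponent_le hb
          (le_trans (by nlinarith [le_abs_self s]) hts)
  · calc x ^ s ≤ 1 := Real.rpow_le_one_of_one_le_of_nonpos hx hs.le
      _ ≤ b ^ t := Real.one_le_rpow hb ht0

theorem stmt_1 {n : ℕ} (hn : 1 ≤ n) (m r' : ℝ) (hr' : 0 < r')
    (p : (Fin n → ℤ) → ℂ) (hp : SymbolOrder m p)
    (K' : ℝ) (hK' : 0 < K')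
    (hinf : {ξ : Fin n → ℤ | ξ ≠ 0 ∧
        ‖p ξ‖ ≤ K' * l1norm ξ ^ (m - r')}.Infinite) :
    ∀ r : ℝ, 0 ≤ r → r < r' → ¬ GHr m r p := by
  intro r hr0 hrr' hGH
  set S := {ξ : Fin n → ℤ | ξ ≠ 0 ∧ ‖p ξ‖ ≤ K' * l1norm ξ ^ (m - r')} with hSdef
  set δ := r' - r with hδdef
  have hδ0 : 0 < δ := by rw [hδdef]; linarith
  have hn0 : (1:ℝ) ≤ (n:ℝ) := by exact_mod_cast hn
  set C₀ : ℝ := K' ^ 2 * (n:ℝ) ^ |m - r'| * 2 ^ |r - m| with hC₀def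
  have hC₀pos : 0 < C₀ := by
    apply mul_pos (mul_pos (by positivity) (Real.rpow_pos_of_pos (by linarith) _))
      (Real.rpow_pos_of_pos two_pos _)
  -- decay bound on S
  have hg : ∀ ξ ∈ S, ‖p ξ‖ ^ 2 * (1 + l2normSq ξ) ^ (r - m)
      ≤ C₀ * (l2normSq ξ) ^ (-δ) := by
    intro ξ hξ
    obtain ⟨hξ0, hpξ⟩ := hξ
    have hL1 : 1 ≤ l2normSq ξ := helper_one_le_l2 hξ0
    have hL0 : (0:ℝ) < l2normSq ξ := lt_of_lt_of_le one_pos hL1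
    have hA0 : 0 ≤ l1norm ξ := helper_l1_nonneg ξ
    have h1 : ‖p ξ‖ ^ 2 ≤ K' ^ 2 * ((l1norm ξ) ^ 2 : ℝ) ^ (m - r') := by
      have hrp : (0:ℝ) ≤ l1norm ξ ^ (m - r') := Real.rpow_nonneg hA0 _
      have hsq : ‖p ξ‖ ^ 2 ≤ (K' * l1norm ξ ^ (m - r')) ^ 2 := by
        nlinarith [norm_nonneg (p ξ)]
      calc ‖p ξ‖ ^ 2 ≤ (K' * l1norm ξ ^ (m - r')) ^ 2 := hsq
        _ = K' ^ 2 * (l1norm ξ ^ (m - r')) ^ 2 := by ring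
        _ = K' ^ 2 * ((l1norm ξ) ^ 2 : ℝ) ^ (m - r') := by
            rw [← Real.rpow_natCast (l1norm ξ ^ (m - r')) 2, ← Real.rpow_mul hA0,
              ← Real.rpow_natCast (l1norm ξ) 2, ← Real.rpow_mul hA0]
            norm_num [mul_comm]
    have h2 : ((l1norm ξ) ^ 2 : ℝ) ^ (m - r') ≤ (n:ℝ) ^ |m - r'| * (l2normSq ξ) ^ (m - r') :=
      helper_rpow_base_bound hL1 (helper_l2_le_l1sq ξ) (helper_l1sq_le ξ) hn0
    have h3 : (1 + l2normSq ξ) ^ (r - m) ≤ 2 ^ |r - m| * (l2normSq ξ) ^ (r - m) :=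
      helper_rpow_base_bound hL1 (by linarith) (by linarith) one_le_two
    have h12 : ‖p ξ‖ ^ 2
        ≤ K' ^ 2 * ((n:ℝ) ^ |m - r'| * (l2normSq ξ) ^ (m - r')) := by
      have := mul_le_mul_of_nonneg_left h2 (sq_nonneg K')
      linarith
    have hLmul : (l2normSq ξ) ^ (m - r') * (l2normSq ξ) ^ (r - m) = (l2normSq ξ) ^ (-δ) := by
      rw [← Real.rpow_add hL0, hδdef]; ring_nf
    calc ‖p ξ‖ ^ 2 * (1 + l2normSq ξ) ^ (r - m)
        ≤ (K' ^ 2 * ((n:ℝ) ^ |m - r'| * (l2normSq ξ) ^ (m - r')))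
            * (2 ^ |r - m| * (l2normSq ξ) ^ (r - m)) := by
          apply mul_le_mul h12 h3 (Real.rpow_nonneg (by linarith) _)
          have := Real.rpow_nonneg hL0.le (m - r')
          have := Real.rpow_nonneg (le_of_lt (lt_of_lt_of_le one_pos hn0)) |m - r'|
          positivity
      _ = C₀ * ((l2normSq ξ) ^ (m - r') * (l2normSq ξ) ^ (r - m)) := by rw [hC₀def]; ring
      _ = C₀ * (l2normSq ξ) ^ (-δ) := by rw [hLmul]
  -- unboundedness
  have hub : ∀ R : ℝ, ∃ ξ, ξ ∈ S ∧ R < l2normSq ξ := by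
    intro R
    by_contra hcon
    push_neg at hcon
    exact hinf (Set.Finite.subset (helper_finite_ball R) (fun ξ hξ => hcon ξ hξ))
  choose step hstepS hstepgt using hub
  set ρ : ℕ → ℝ := fun j => max 1 ((C₀ * 2 ^ j) ^ (1/δ)) with hρdef
  let e : ℕ → (Fin n → ℤ) := fun j =>
    Nat.rec (step (ρ 0)) (fun i prev => step (max (ρ (i+1)) (l2normSq prev))) j
  have hemem : ∀ j, e j ∈ S := by
    intro j; cases j with
    | zero => exact hstepS _
    | succ i => exact hstepS _
  have heρ : ∀ j, ρ j < l2normSq (e j) := by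
    intro j; cases j with
    | zero => exact hstepgt _
    | succ i => exact lt_of_le_of_lt (le_max_left _ _) (hstepgt _)
  have hmono : StrictMono fun j => l2normSq (e j) :=
    strictMono_nat_of_lt_succ fun j => lt_of_le_of_lt (le_max_right _ _) (hstepgt _)
  have heinj : Function.Injective e := fun a b hab => hmono.injective (congrArg l2normSq hab)
  have hL1e : ∀ j, 1 ≤ l2normSq (e j) := fun j => helper_one_le_l2 (hemem j).1
  -- decay along the sequence
  have hdecay : ∀ j, C₀ * (l2normSq (e j)) ^ (-δ) ≤ (1/2) ^ j := by
    intro j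
    have h1L : 1 ≤ l2normSq (e j) := hL1e j
    have hL0 : 0 < l2normSq (e j) := by linarith
    have hX : (C₀ * 2 ^ j) ^ (1/δ) ≤ l2normSq (e j) :=
      le_trans (le_max_right _ _) (heρ j).le
    have hX0 : (0:ℝ) ≤ C₀ * 2 ^ j := by positivity
    have hLδ : C₀ * 2 ^ j ≤ (l2normSq (e j)) ^ δ := by
      calc C₀ * 2 ^ j = ((C₀ * 2 ^ j) ^ (1/δ)) ^ δ := by
            rw [one_div, Real.rpow_inv_rpow hX0 (ne_of_gt hδ0)]
        _ ≤ (l2normSq (e j)) ^ δ := Real.rpow_le_rpow (Real.rpow_nonneg hX0 _) hX hδ0.le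
    calc C₀ * (l2normSq (e j)) ^ (-δ) = C₀ * ((l2normSq (e j)) ^ δ)⁻¹ := by
          rw [Real.rpow_neg hL0.le]
      _ ≤ C₀ * (C₀ * 2 ^ j)⁻¹ := by
          apply mul_le_mul_of_nonneg_left _ hC₀pos.le
          exact inv_anti₀ (by positivity) hLδ
      _ = (2 ^ j : ℝ)⁻¹ := by
          rw [mul_inv, ← mul_assoc, mul_inv_cancel₀ hC₀pos.ne', one_mul]
      _ = (1/2) ^ j := by rw [one_div, inv_pow]
  -- the counterexample u
  set w : (Fin n → ℤ) → ℝ := fun ξ => (1 + l2normSq ξ) ^ ((r - m)/2) with hwdef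
  set u : (Fin n → ℤ) → ℂ := fun ξ => ((Set.indicator (Set.range e) w ξ : ℝ) : ℂ) with hudef
  have hwnn : ∀ ξ, 0 ≤ w ξ := fun ξ =>
    Real.rpow_nonneg (by linarith [helper_l2_nonneg ξ]) _
  have habs_u : ∀ ξ, ‖u ξ‖ = Set.indicator (Set.range e) w ξ := by
    intro ξ
    rw [hudef, Complex.norm_real, Real.norm_eq_abs, abs_of_nonneg]
    exact Set.indicator_nonneg (fun ξ' _ => hwnn ξ') ξ
  have h1pL : ∀ ξ : Fin n → ℤ, (0:ℝ) < 1 + l2normSq ξ := fun ξ => by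
    linarith [helper_l2_nonneg ξ]
  have hwsq : ∀ ξ : Fin n → ℤ, w ξ ^ 2 = (1 + l2normSq ξ) ^ (r - m) := by
    intro ξ
    rw [hwdef, ← Real.rpow_natCast ((1 + l2normSq ξ) ^ ((r - m)/2)) 2,
      ← Real.rpow_mul (h1pL ξ).le]
    norm_num
  -- PolyGrowth u
  have hpg : PolyGrowth u := by
    refine ⟨1, |r - m| + 1, one_pos, by positivity, fun ξ => ?_⟩
    rw [habs_u, one_mul]
    have hb : (1:ℝ) ≤ 1 + Real.sqrt (l2normSq ξ) := by
      linarith [Real.sqrt_nonneg (l2normSq ξ)]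
    by_cases hξ : ξ ∈ Set.range e
    · rw [Set.indicator_of_mem hξ]
      apply helper_rpow_growth hb (by linarith [helper_l2_nonneg ξ])
      · nlinarith [Real.sqrt_nonneg (l2normSq ξ), Real.sq_sqrt (helper_l2_nonneg ξ)]
      · have : |(r - m)/2| = |r - m|/2 := by rw [abs_div]; norm_num
        rw [this]; linarith [abs_nonneg (r - m)]
    · rw [Set.indicator_of_notMem hξ]
      exact Real.rpow_nonneg (by linarith) _
  -- p·u ∈ H^0
  have hsob0 : InSobolev 0 (fun ξ => p ξ * u ξ) := by
    unfold InSobolev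
    apply (Function.Injective.summable_iff heinj ?_).mp
    · apply Summable.of_nonneg_of_le _ _ (summable_geometric_two)
      · intro j
        exact mul_nonneg (Real.rpow_nonneg (h1pL (e j)).le _) (sq_nonneg _)
      · intro j
        have hLj : 1 ≤ l2normSq (e j) := hL1e j
        simp only [Function.comp_apply, Real.rpow_zero, one_mul, norm_mul]
        rw [habs_u, Set.indicator_of_mem (Set.mem_range_self j), mul_pow, hwsq]
        exact le_trans (hg (e j) (hemem j)) (hdecay j)
    · intro ξ hξ
      simp [hudef, Set.indicator_of_notMem hξ]
  have hsob := hGH 0 u hpg hsob0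
  -- contradiction: terms are all 1 along range e
  have hG1 : ∀ j, (1 + l2normSq (e j)) ^ (0 + m - r) * ‖u (e j)‖ ^ 2 = 1 := by
    intro j
    rw [habs_u, Set.indicator_of_mem (Set.mem_range_self j), hwsq,
      ← Real.rpow_add (h1pL (e j))]
    norm_num
  have hten := hsob.tendsto_cofinite_zero
  have hev : ∀ᶠ ξ in Filter.cofinite,
      (1 + l2normSq ξ) ^ (0 + m - r) * ‖u ξ‖ ^ 2 < 1 :=
    hten.eventually_lt_const one_pos
  rw [Filter.eventually_cofinite] at hev
  apply Set.infinite_range_of_injective heinj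
  apply hev.subset
  rintro ξ ⟨j, rfl⟩
  show ¬ (1 + l2normSq (e j)) ^ (0 + m - r) * ‖u (e j)‖ ^ 2 < 1
  rw [hG1 j]
  exact lt_irrefl 1
end

section
/- Let n ≥ 1, m ∈ ℝ, r ≥ 0, and let p : ℤⁿ → ℂ be a symbol of order m. Then p(D) is GH-r if and only if there exists a single fixed k ∈ ℝ such that for every polynomial-growth u : ℤⁿ → ℂ, the condition p·u ∈ H^k(𝕋ⁿ) implies u ∈ H^{k+m−r}(𝕋ⁿ). -/
open scoped BigOperators

section Aux
lemma aux_rpow_sq (x a b : ℝ) (hx : 0 < x) (c : ℝ) :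
    x ^ b * (x ^ a * c) ^ 2 = x ^ (b + (a + a)) * c ^ 2 := by
  have h2 : (x ^ a) ^ 2 = x ^ (a + a) := by
    rw [sq, ← Real.rpow_add hx]
  rw [mul_pow, h2, ← mul_assoc, ← Real.rpow_add hx]

lemma aux_l2_nonneg {n : ℕ} (ξ : Fin n → ℤ) : (0:ℝ) ≤ l2normSq ξ :=
  Finset.sum_nonneg fun j _ => sq_nonneg _
end Aux

theorem stmt_5 {n : ℕ} (hn : 1 ≤ n) (m r : ℝ) (hr : 0 ≤ r)
    (p : (Fin n → ℤ) → ℂ) (hp : SymbolOrder m p) :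
    GHr m r p ↔
      ∃ k : ℝ, ∀ u : (Fin n → ℤ) → ℂ, PolyGrowth u →
        InSobolev k (fun ξ => p ξ * u ξ) → InSobolev (k + m - r) u := by

  constructor
  · intro h
    exact ⟨0, fun u hu h2 => h 0 u hu h2⟩
  · rintro ⟨k, hk⟩ k' u hu hpu
    set a : ℝ := (k' - k) / 2 with ha
    have hka : k + (a + a) = k' := by rw [ha]; ring
    set v : (Fin n → ℤ) → ℂ := fun ξ => (((1 + l2normSq ξ) ^ a : ℝ) : ℂ) * u ξ with hv
    have hx : ∀ ξ : Fin n → ℤ, (0:ℝ) < 1 + l2normSq ξ := fun ξ => by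
      have := aux_l2_nonneg ξ; linarith
    have habs : ∀ ξ, ‖v ξ‖ = (1 + l2normSq ξ) ^ a * ‖u ξ‖ := by
      intro ξ
      rw [hv]
      rw [norm_mul, Complex.norm_real, Real.norm_eq_abs, abs_of_pos (Real.rpow_pos_of_pos (hx ξ) a)]
    have hvp : PolyGrowth v := by
      obtain ⟨C, N, hC, hN, hCN⟩ := hu
      refine ⟨C, N + 2 * |a|, hC, by positivity, fun ξ => ?_⟩
      have hs0 : (0:ℝ) ≤ Real.sqrt (l2normSq ξ) := Real.sqrt_nonneg _
      have h1 : (1:ℝ) ≤ 1 + Real.sqrt (l2normSq ξ) := by linarith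
      have key : (1 + l2normSq ξ) ^ a ≤ (1 + Real.sqrt (l2normSq ξ)) ^ (2 * |a|) := by
        rcases le_or_gt 0 a with hA | hA
        · have hsq : Real.sqrt (l2normSq ξ) ^ 2 = l2normSq ξ :=
            Real.sq_sqrt (aux_l2_nonneg ξ)
          have hb : 1 + l2normSq ξ ≤ (1 + Real.sqrt (l2normSq ξ)) ^ (2:ℕ) := by
            nlinarith
          have hb' : 1 + l2normSq ξ ≤ (1 + Real.sqrt (l2normSq ξ)) ^ ((2:ℕ):ℝ) := by
            rwa [Real.rpow_natCast]
          calc (1 + l2normSq ξ) ^ a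
              ≤ ((1 + Real.sqrt (l2normSq ξ)) ^ ((2:ℕ):ℝ)) ^ a :=
                Real.rpow_le_rpow (hx ξ).le hb' hA
            _ = (1 + Real.sqrt (l2normSq ξ)) ^ (2 * |a|) := by
                rw [← Real.rpow_mul (by linarith), abs_of_nonneg hA]
                norm_num
        · have h1' : (1 + l2normSq ξ) ^ a ≤ 1 :=
            Real.rpow_le_one_of_one_le_of_nonpos (by linarith [aux_l2_nonneg ξ]) hA.le
          refine h1'.trans (Real.one_le_rpow h1 (by positivity))
      calc ‖v ξ‖ = (1 + l2normSq ξ) ^ a * ‖u ξ‖ := habs ξ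
        _ ≤ (1 + Real.sqrt (l2normSq ξ)) ^ (2 * |a|) * (C * (1 + Real.sqrt (l2normSq ξ)) ^ N) :=
            mul_le_mul key (hCN ξ) (norm_nonneg _) (by positivity)
        _ = C * (1 + Real.sqrt (l2normSq ξ)) ^ (N + 2 * |a|) := by
            rw [Real.rpow_add (by linarith)]; ring
    have hpv : InSobolev k (fun ξ => p ξ * v ξ) := by
      refine hpu.congr fun ξ => ?_
      have : ‖p ξ * v ξ‖ = (1 + l2normSq ξ) ^ a * ‖p ξ * u ξ‖ := by
        rw [hv, show p ξ * ((((1 + l2normSq ξ) ^ a : ℝ) : ℂ) * u ξ)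
              = (((1 + l2normSq ξ) ^ a : ℝ) : ℂ) * (p ξ * u ξ) by ring,
          norm_mul, Complex.norm_real, Real.norm_eq_abs, abs_of_pos (Real.rpow_pos_of_pos (hx ξ) a)]
      rw [this, aux_rpow_sq _ _ _ (hx ξ), hka]
    have hkv := hk v hvp hpv
    refine hkv.congr fun ξ => ?_
    rw [habs ξ, aux_rpow_sq _ _ _ (hx ξ)]
    congr 2
    rw [← hka]; ring
end
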